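/- Let n ≥ 2, let 0 < λ_1 < ⋯ < λ_{n−1}, b_1, …, b_{n−1} < 0 and M > 0 be given. Define c_k = −Σ_{j=1}^{n−1} b_j b_k/(λ_j + λ_k), W(z) = Σ_{k=1}^{n−1} b_k/(z − λ_k), Z(z) = −1/(2Mz) + Σ_{k=1}^{n−1} c_k/(z − λ_k), W*(z) = −W(−z), Z*(z) = Z(−z). Fix 1 ≤ k ≤ n−1. Then there exist unique polynomials Q, P, P̂ with deg Q ≤ k, deg P ≤ k−1, deg P̂ ≤ k−1, Q(0) = 0 and P(0) = 1, such that, as z → ∞: Q(z)Z(z) − P̂(z) = O(z^{−1}), Q(z)W(z) − P(z) = O(1), and P̂(z) + P(z)W*(z) + Q(z)Z*(z) = O(z^{−(k+1)}). Moreover, writing Q(z) = Σ_{j=1}^{k} q_j z^j and setting β_j = Σ_{a=1}^{n−1} b_a λ_a^j and I_{ij} = Σ_{a,b=1}^{n−1} b_a b_b λ_a^i λ_b^j/(λ_a + λ_b), the coefficients satisfy the k×k linear system Σ_{j=1}^{k} I_{i, j−1} q_j = β_{i−1} for i = 1, …, k. -/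

import Mathlib

open Polynomial Filter Asymptotics Matrix Finset



open scoped Classical in
noncomputable def monoFuns (k m : ℕ) : Finset (Fin k → Fin m) :=
  Finset.univ.filter StrictMono

theorem cauchy_binet {k m : ℕ} (M : Matrix (Fin k) (Fin m) ℝ) (N : Matrix (Fin m) (Fin k) ℝ) :
    (M * N).det = ∑ f ∈ monoFuns k m, (M.submatrix id f).det * (N.submatrix f id).det := by
  classical
  have step1 : (M * N).det
      = ∑ g : Fin k → Fin m, (M.submatrix id g).det * ∏ i, N (g i) i := by
    have key : ∀ σ : Equiv.Perm (Fin k), ∏ i, (M * N) (σ i) i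
        = ∑ g : Fin k → Fin m, ∏ i, (M (σ i) (g i) * N (g i) i) := by
      intro σ
      simp only [Matrix.mul_apply]
      exact Fintype.prod_sum (fun i a => M (σ i) a * N a i)
    rw [Matrix.det_apply']
    simp_rw [key, Finset.mul_sum]
    rw [Finset.sum_comm]
    refine Finset.sum_congr rfl fun g _ => ?_
    rw [Matrix.det_apply', Finset.sum_mul]
    refine Finset.sum_congr rfl fun σ _ => ?_
    rw [Finset.prod_mul_distrib]
    simp [Matrix.submatrix_apply]
    ring
  have step2 : ∑ g : Fin k → Fin m, (M.submatrix id g).det * ∏ i, N (g i) i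
      = ∑ g ∈ Finset.univ.filter (fun g : Fin k → Fin m => Function.Injective g),
          (M.submatrix id g).det * ∏ i, N (g i) i := by
    symm
    apply Finset.sum_subset (Finset.filter_subset _ _)
    intro g _ hg
    simp only [Finset.mem_filter, Finset.mem_univ, true_and] at hg
    rw [Function.not_injective_iff] at hg
    obtain ⟨a, b, hab, hne⟩ := hg
    rw [Matrix.det_zero_of_column_eq hne (fun i => by simp [Matrix.submatrix_apply, hab]),
      zero_mul]
  have step3 : ∑ g ∈ Finset.univ.filter (fun g : Fin k → Fin m => Function.Injective g),
          (M.submatrix id g).det * ∏ i, N (g i) i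
      = ∑ p ∈ (monoFuns k m) ×ˢ (Finset.univ : Finset (Equiv.Perm (Fin k))),
          (M.submatrix id (p.1 ∘ p.2)).det * ∏ i, N ((p.1 ∘ p.2) i) i := by
    symm
    refine Finset.sum_bij (fun p _ => p.1 ∘ p.2) ?_ ?_ ?_ ?_
    · rintro ⟨f, σ⟩ hp
      simp only [Finset.mem_product, monoFuns, Finset.mem_filter, Finset.mem_univ, true_and] at hp ⊢
      exact hp.1.injective.comp σ.injective
    · rintro ⟨f₁, σ₁⟩ hp₁ ⟨f₂, σ₂⟩ hp₂ heq
      simp only [Finset.mem_product, monoFuns, Finset.mem_filter, Finset.mem_univ, true_and] at hp₁ hp₂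
      simp only [] at heq
      have hmono₁ := hp₁.1
      have hmono₂ := hp₂.1
      have himg : Finset.image f₁ Finset.univ = Finset.image f₂ Finset.univ := by
        have h1 : Finset.image (f₁ ∘ σ₁) Finset.univ = Finset.image f₁ Finset.univ := by
          rw [← Finset.image_image]
          congr 1
          exact Finset.image_univ_equiv σ₁
        have h2 : Finset.image (f₂ ∘ σ₂) Finset.univ = Finset.image f₂ Finset.univ := by
          rw [← Finset.image_image]
          congr 1
          exact Finset.image_univ_equiv σ₂
        rw [← h1, ← h2, heq]
      have hcard : (Finset.image f₁ Finset.univ).card = k := by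
        rw [Finset.card_image_of_injective _ hmono₁.injective, Finset.card_univ, Fintype.card_fin]
      have hf1 : f₁ = (Finset.image f₁ Finset.univ).orderEmbOfFin hcard :=
        Finset.orderEmbOfFin_unique hcard (fun x => Finset.mem_image_of_mem _ (Finset.mem_univ x)) hmono₁
      have hcard₂ : (Finset.image f₁ Finset.univ).card = k := hcard
      have hf2 : f₂ = (Finset.image f₁ Finset.univ).orderEmbOfFin hcard := by
        refine Finset.orderEmbOfFin_unique hcard ?_ hmono₂
        intro x
        rw [himg]
        exact Finset.mem_image_of_mem _ (Finset.mem_univ x)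
      have hff : f₁ = f₂ := hf1.trans hf2.symm
      have hσ : σ₁ = σ₂ := by
        ext i
        have := congrFun heq i
        simp only [Function.comp_apply, hff] at this
        exact congrArg Fin.val (hmono₂.injective this)
      exact Prod.ext hff hσ
    · intro g hg
      simp only [Finset.mem_filter, Finset.mem_univ, true_and] at hg
      set s : Finset (Fin m) := Finset.image g Finset.univ with hs
      have hcard : s.card = k := by
        rw [hs, Finset.card_image_of_injective _ hg, Finset.card_univ, Fintype.card_fin]
      set f : Fin k → Fin m := fun i => s.orderEmbOfFin hcard i with hfdef
      have hfmono : StrictMono f := (s.orderEmbOfFin hcard).strictMono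
      have hex : ∀ i : Fin k, ∃! j : Fin k, f j = g i := by
        intro i
        have hgi : g i ∈ s := Finset.mem_image_of_mem _ (Finset.mem_univ i)
        have : g i ∈ Set.range (s.orderEmbOfFin hcard) := by
          rw [Finset.range_orderEmbOfFin]
          exact hgi
        obtain ⟨j, hj⟩ := this
        exact ⟨j, hj, fun j' hj' => hfmono.injective (hj'.trans hj.symm)⟩
      set t : Fin k → Fin k := fun i => Fintype.choose _ (hex i) with htdef
      have hft : ∀ i, f (t i) = g i := fun i => Fintype.choose_spec _ (hex i)
      have htinj : Function.Injective t := by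
        intro i i' h
        apply hg
        rw [← hft i, ← hft i', h]
      have htbij : Function.Bijective t := Finite.injective_iff_bijective.1 htinj
      refine ⟨⟨f, Equiv.ofBijective t htbij⟩, ?_, ?_⟩
      · simp only [Finset.mem_product, monoFuns, Finset.mem_filter, Finset.mem_univ, true_and]
        exact ⟨hfmono, trivial⟩
      · funext i
        exact (hft i)
    · intro p hp
      rfl
  rw [step1, step2, step3, Finset.sum_product]
  refine Finset.sum_congr rfl fun f hf => ?_
  rw [Matrix.det_apply' (N.submatrix f id), Finset.mul_sum]
  refine Finset.sum_congr rfl fun σ _ => ?_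
  have hsub : M.submatrix id (f ∘ σ) = (M.submatrix id f).submatrix id σ := rfl
  rw [hsub, Matrix.det_permute']
  simp only [Matrix.submatrix_apply, id_eq, Function.comp_apply]
  ring


lemma cauchy_det_pos : ∀ (r : ℕ) (x y : Fin r → ℝ), StrictMono x → StrictMono y →
    (∀ i j, 0 < x i + y j) → 0 < (Matrix.of fun i j => (x i + y j)⁻¹).det := by
  intro r
  induction r with
  | zero => intro x y _ _ _; simp [Matrix.det_isEmpty]
  | succ r ih =>
    intro x y hx hy hxy
    set A : Matrix (Fin 1) (Fin 1) ℝ := Matrix.of fun _ _ => (x 0 + y 0)⁻¹ with hA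
    set B : Matrix (Fin 1) (Fin r) ℝ := Matrix.of fun _ j => (x 0 + y j.succ)⁻¹ with hB
    set Cc : Matrix (Fin r) (Fin 1) ℝ := Matrix.of fun i _ => (x i.succ + y 0)⁻¹ with hCc
    set D : Matrix (Fin r) (Fin r) ℝ := Matrix.of fun i j => (x i.succ + y j.succ)⁻¹ with hD
    have h00 : (0:ℝ) < x 0 + y 0 := hxy 0 0
    set Ainv : Matrix (Fin 1) (Fin 1) ℝ := Matrix.of fun _ _ => (x 0 + y 0) with hAinv
    have hmul : Ainv * A = 1 := by
      ext i j
      fin_cases i <;> fin_cases j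
      simp [Matrix.mul_apply, hA, hAinv, Matrix.one_apply, mul_inv_cancel₀ h00.ne']
    have hmul' : A * Ainv = 1 := by
      ext i j
      fin_cases i <;> fin_cases j
      simp [Matrix.mul_apply, hA, hAinv, Matrix.one_apply, inv_mul_cancel₀ h00.ne']
    haveI : Invertible A := ⟨Ainv, hmul, hmul'⟩
    have hinvOf : ⅟A = Ainv := invOf_eq_right_inv hmul'
    -- the equivalence
    set e : Fin 1 ⊕ Fin r ≃ Fin (r + 1) :=
      finSumFinEquiv.trans (finCongr (Nat.add_comm 1 r)) with he
    have he0 : ∀ z : Fin 1, e (Sum.inl z) = 0 := by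
      intro z
      fin_cases z
      apply Fin.ext
      simp [he, finSumFinEquiv]
    have heS : ∀ i : Fin r, e (Sum.inr i) = i.succ := by
      intro i
      apply Fin.ext
      simp [he, finSumFinEquiv]
      try omega
    have hsub' : (Matrix.of fun i j => (x i + y j)⁻¹).submatrix e e
        = Matrix.fromBlocks A B Cc D := by
      ext i j
      rcases i with z | z <;> rcases j with w | w <;>
        simp [Matrix.submatrix_apply, Matrix.fromBlocks, he0, heS, hA, hB, hCc, hD]
    have hdet0 : (Matrix.fromBlocks A B Cc D).det
        = (Matrix.of fun i j => (x i + y j)⁻¹).det := by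
      rw [← hsub']
      exact Matrix.det_submatrix_equiv_self e _
    rw [← hdet0, Matrix.det_fromBlocks₁₁]
    have hdetA : A.det = (x 0 + y 0)⁻¹ := by simp [hA, Matrix.det_fin_one]
    set d : Fin r → ℝ := fun i => (x i.succ - x 0) / (x i.succ + y 0) with hd
    set ee : Fin r → ℝ := fun j => (y j.succ - y 0) / (x 0 + y j.succ) with hee
    have hdpos : ∀ i, 0 < d i := by
      intro i
      apply div_pos (by linarith [hx (Fin.succ_pos i)]) (hxy i.succ 0)
    have heepos : ∀ j, 0 < ee j := by
      intro j
      apply div_pos (by linarith [hy (Fin.succ_pos j)]) (hxy 0 j.succ)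
    have hSchur : D - Cc * ⅟A * B
        = Matrix.of fun i j => d i * (Matrix.of fun i j => ee j *
            ((Matrix.of fun (i j : Fin r) => (x i.succ + y j.succ)⁻¹) i j)) i j := by
      rw [hinvOf]
      ext i j
      have h1 : (0:ℝ) < x i.succ + y j.succ := hxy _ _
      have h2 : (0:ℝ) < x i.succ + y 0 := hxy _ _
      have h3 : (0:ℝ) < x 0 + y j.succ := hxy _ _
      simp only [Matrix.sub_apply, Matrix.mul_apply, Fin.sum_univ_one, Matrix.of_apply,
        hA, hB, hCc, hD, hAinv, hd, hee]
      field_simp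
      ring
    rw [hSchur, Matrix.det_mul_column d, Matrix.det_mul_row ee]
    have hxs : StrictMono (fun i : Fin r => x i.succ) := fun a b h => hx (Fin.succ_lt_succ_iff.2 h)
    have hys : StrictMono (fun j : Fin r => y j.succ) := fun a b h => hy (Fin.succ_lt_succ_iff.2 h)
    have hih := ih (fun i => x i.succ) (fun j => y j.succ) hxs hys (fun i j => hxy _ _)
    have hprodd : 0 < ∏ i, d i := Finset.prod_pos fun i _ => hdpos i
    have hprode : 0 < ∏ j, ee j := Finset.prod_pos fun j _ => heepos j
    rw [hdetA]
    positivity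


lemma term_isBigO (A μ : ℝ) : (fun z : ℝ => A / (z - μ)) =O[atTop] (fun z : ℝ => z⁻¹) := by
  rw [Asymptotics.isBigO_iff]
  refine ⟨2 * |A|, ?_⟩
  filter_upwards [eventually_ge_atTop (2 * |μ| + 1)] with z hz
  have hμ : 0 ≤ |μ| := abs_nonneg μ
  have hz1 : (1:ℝ) ≤ z := by linarith
  have hz0 : (0:ℝ) < z := by linarith
  have hpos : 0 < z - μ := by
    have : μ ≤ |μ| := le_abs_self μ
    nlinarith
  have hhalf : z / 2 ≤ z - μ := by
    have : μ ≤ |μ| := le_abs_self μ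
    nlinarith
  have h1 : |A / (z - μ)| = |A| / (z - μ) := by
    rw [abs_div, abs_of_pos hpos]
  rw [Real.norm_eq_abs, Real.norm_eq_abs, h1, abs_inv, abs_of_pos hz0]
  calc |A| / (z - μ) ≤ |A| / (z / 2) := by gcongr <;> try positivity
    _ = 2 * |A| * z⁻¹ := by field_simp; try ring

lemma pf_isBigO {ι : Type*} [Fintype ι] (A μ : ι → ℝ) :
    (fun z : ℝ => ∑ t, A t / (z - μ t)) =O[atTop] (fun z : ℝ => z⁻¹) :=
  by
    have h := Asymptotics.IsBigO.sum (s := Finset.univ) fun t _ => term_isBigO (A t) (μ t)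
    exact h.congr_left fun z => by rw [Finset.sum_apply]

lemma pf_tendsto_zero {ι : Type*} [Fintype ι] (A μ : ι → ℝ) :
    Tendsto (fun z : ℝ => ∑ t, A t / (z - μ t)) atTop (nhds 0) :=
  (pf_isBigO A μ).trans_tendsto tendsto_inv_atTop_zero

lemma inv_expansion (K : ℕ) : ∀ (z μ : ℝ), z ≠ 0 → z - μ ≠ 0 →
    (z - μ)⁻¹ = (∑ m ∈ Finset.range K, μ ^ m * (z ^ (m + 1))⁻¹)
      + μ ^ K * ((z ^ K)⁻¹ * (z - μ)⁻¹) := by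
  induction K with
  | zero => intro z μ hz hzμ; simp
  | succ K ih =>
    intro z μ hz hzμ
    conv_lhs => rw [ih z μ hz hzμ]
    rw [Finset.sum_range_succ]
    have key : μ ^ K * ((z ^ K)⁻¹ * (z - μ)⁻¹)
        = μ ^ K * (z ^ (K + 1))⁻¹ + μ ^ (K + 1) * ((z ^ (K + 1))⁻¹ * (z - μ)⁻¹) := by
      have hzK : z ^ K ≠ 0 := pow_ne_zero _ hz
      have hzK1 : z ^ (K + 1) ≠ 0 := pow_ne_zero _ hz
      field_simp
      ring
    rw [key]; ring

lemma pf_isBigO_pow {ι : Type*} [Fintype ι] (A μ : ι → ℝ) (K : ℕ)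
    (h : ∀ m < K, ∑ t, A t * μ t ^ m = 0) :
    (fun z : ℝ => ∑ t, A t / (z - μ t)) =O[atTop] (fun z : ℝ => (z ^ (K + 1))⁻¹) := by
  have heq : (fun z : ℝ => ∑ t, A t / (z - μ t))
      =ᶠ[atTop] (fun z : ℝ => (z ^ K)⁻¹ * ∑ t, (A t * μ t ^ K) / (z - μ t)) := by
    have hev : ∀ᶠ z : ℝ in atTop, (0 < z ∧ ∀ t : ι, μ t < z) := by
      refine (eventually_gt_atTop 0).and ?_
      exact Filter.eventually_all.2 fun t => eventually_gt_atTop (μ t)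
    filter_upwards [hev] with z hz
    obtain ⟨hz0, hμ⟩ := hz
    have key : ∀ t : ι, A t / (z - μ t)
        = (∑ m ∈ Finset.range K, (A t * μ t ^ m) * (z ^ (m + 1))⁻¹)
          + (z ^ K)⁻¹ * ((A t * μ t ^ K) / (z - μ t)) := by
      intro t
      have h1 : z - μ t ≠ 0 := by have := hμ t; linarith
      rw [div_eq_mul_inv (A t), inv_expansion K z (μ t) hz0.ne' h1]
      rw [mul_add, Finset.mul_sum]
      congr 1
      · exact Finset.sum_congr rfl fun m _ => by ring
      · rw [div_eq_mul_inv]; ring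
    rw [Finset.sum_congr rfl fun t _ => key t, Finset.sum_add_distrib]
    rw [Finset.sum_comm]
    have hzero : ∀ m ∈ Finset.range K,
        ∑ t, (A t * μ t ^ m) * (z ^ (m + 1))⁻¹ = 0 := by
      intro m hm
      rw [← Finset.sum_mul, h m (Finset.mem_range.1 hm), zero_mul]
    rw [Finset.sum_congr rfl hzero, Finset.sum_const, smul_zero, zero_add, Finset.mul_sum]
  have h2 : (fun z : ℝ => (z ^ K)⁻¹ * ∑ t, (A t * μ t ^ K) / (z - μ t))
      =O[atTop] (fun z : ℝ => (z ^ K)⁻¹ * z⁻¹) :=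
    (isBigO_refl (fun z : ℝ => (z ^ K)⁻¹) atTop).mul (pf_isBigO _ μ)
  have h3 : (fun z : ℝ => (z ^ K)⁻¹ * z⁻¹) = (fun z : ℝ => (z ^ (K + 1))⁻¹) := by
    funext z; rw [pow_succ, mul_inv]
  exact Asymptotics.IsBigO.congr' (h3 ▸ h2) heq.symm (Filter.EventuallyEq.refl _ _)
lemma pf_moments_vanish {ι : Type*} [Fintype ι] (A μ : ι → ℝ) (K : ℕ)
    (h : (fun z : ℝ => ∑ t, A t / (z - μ t)) =O[atTop] (fun z : ℝ => (z ^ (K + 1))⁻¹)) :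
    ∀ m < K, ∑ t, A t * μ t ^ m = 0 := by
  intro m
  induction m using Nat.strong_induction_on with
  | _ m ih =>
    intro hmK
    -- eventual identity : z^(m+1) * f z = s_m + tail z
    have heq : ∀ᶠ z : ℝ in atTop, z ^ (m + 1) * ∑ t, A t / (z - μ t)
        = (∑ t, A t * μ t ^ m) + ∑ t, (A t * μ t ^ (m + 1)) / (z - μ t) := by
      have hev : ∀ᶠ z : ℝ in atTop, (0 < z ∧ ∀ t : ι, μ t < z) := by
        refine (eventually_gt_atTop 0).and ?_
        exact Filter.eventually_all.2 fun t => eventually_gt_atTop (μ t)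
      filter_upwards [hev] with z hz
      obtain ⟨hz0, hμ⟩ := hz
      have key : ∀ t : ι, z ^ (m + 1) * (A t / (z - μ t))
          = (∑ j ∈ Finset.range (m + 1), (A t * μ t ^ j) * z ^ (m - j))
            + (A t * μ t ^ (m + 1)) / (z - μ t) := by
        intro t
        have h1 : z - μ t ≠ 0 := by have := hμ t; linarith
        rw [div_eq_mul_inv (A t), inv_expansion (m + 1) z (μ t) hz0.ne' h1]
        rw [mul_add, mul_add, Finset.mul_sum, Finset.mul_sum]
        congr 1
        · refine Finset.sum_congr rfl fun j hj => ?_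
          have hj' : j + 1 ≤ m + 1 := Finset.mem_range.1 hj
          have hzj : (z ^ (j + 1))⁻¹ * z ^ (m + 1) = z ^ (m - j) := by
            have hsplit : z ^ (m + 1) = z ^ (j + 1) * z ^ (m - j) := by
              rw [← pow_add]; congr 1; omega
            rw [hsplit, inv_mul_cancel_left₀ (pow_ne_zero _ hz0.ne')]
          calc z ^ (m + 1) * (A t * (μ t ^ j * (z ^ (j + 1))⁻¹))
              = (A t * μ t ^ j) * ((z ^ (j + 1))⁻¹ * z ^ (m + 1)) := by ring
            _ = (A t * μ t ^ j) * z ^ (m - j) := by rw [hzj]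
        · have hzm : (z ^ (m + 1))⁻¹ * z ^ (m + 1) = 1 :=
            inv_mul_cancel₀ (pow_ne_zero _ hz0.ne')
          calc z ^ (m + 1) * (A t * (μ t ^ (m + 1) * ((z ^ (m + 1))⁻¹ * (z - μ t)⁻¹)))
              = (A t * μ t ^ (m + 1)) * (z - μ t)⁻¹ * ((z ^ (m + 1))⁻¹ * z ^ (m + 1)) := by ring
            _ = (A t * μ t ^ (m + 1)) / (z - μ t) := by rw [hzm, div_eq_mul_inv]; ring
      rw [Finset.mul_sum, Finset.sum_congr rfl fun t _ => key t, Finset.sum_add_distrib]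
      congr 1
      rw [Finset.sum_comm]
      rw [Finset.sum_range_succ]
      have hzero : ∀ j ∈ Finset.range m, ∑ t, (A t * μ t ^ j) * z ^ (m - j) = 0 := by
        intro j hj
        rw [← Finset.sum_mul, ih j (Finset.mem_range.1 hj) (lt_trans (Finset.mem_range.1 hj) hmK),
          zero_mul]
      rw [Finset.sum_congr rfl hzero, Finset.sum_const, smul_zero, zero_add]
      simp
    have hlim1 : Tendsto (fun z : ℝ => z ^ (m + 1) * ∑ t, A t / (z - μ t)) atTop
        (nhds (∑ t, A t * μ t ^ m)) := by
      rw [Filter.tendsto_congr' heq]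
      have := (tendsto_const_nhds (x := ∑ t, A t * μ t ^ m) (f := atTop (α := ℝ))).add
        (pf_tendsto_zero (fun t => A t * μ t ^ (m + 1)) μ)
      simpa using this
    have hlim0 : Tendsto (fun z : ℝ => z ^ (m + 1) * ∑ t, A t / (z - μ t)) atTop (nhds 0) := by
      have hO : (fun z : ℝ => z ^ (m + 1) * ∑ t, A t / (z - μ t))
          =O[atTop] (fun z : ℝ => z ^ (m + 1) * (z ^ (K + 1))⁻¹) :=
        (isBigO_refl (fun z : ℝ => z ^ (m + 1)) atTop).mul h
      refine hO.trans_tendsto ?_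
      have heq2 : ∀ᶠ z : ℝ in atTop, z ^ (m + 1) * (z ^ (K + 1))⁻¹ = (z ^ (K - m))⁻¹ := by
        filter_upwards [eventually_gt_atTop 0] with z hz0
        have hexp : z ^ (K + 1) = z ^ (m + 1) * z ^ (K - m) := by
          rw [← pow_add]; congr 1; omega
        rw [hexp, mul_inv, ← mul_assoc, mul_inv_cancel₀ (pow_ne_zero _ hz0.ne'), one_mul]
      rw [Filter.tendsto_congr' heq2]
      have hKm : K - m ≠ 0 := by omega
      exact (tendsto_pow_atTop hKm).inv_tendsto_atTop
    exact tendsto_nhds_unique hlim1 hlim0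

lemma poly_isBigO_one_eq_C {p : Polynomial ℝ}
    (h : (fun z => p.eval z) =O[atTop] (fun _ : ℝ => (1 : ℝ))) :
    p = Polynomial.C (p.coeff 0) := by
  by_cases hdeg : p.degree ≤ 0
  · exact (Polynomial.eq_C_of_degree_le_zero hdeg)
  push_neg at hdeg
  exfalso
  have htend : Tendsto (fun x : ℝ => |p.eval x|) atTop atTop :=
    Polynomial.abs_tendsto_atTop p hdeg
  obtain ⟨C, hC⟩ := h.bound
  simp only [norm_one, mul_one, Real.norm_eq_abs] at hC
  have h2 : ∀ᶠ x : ℝ in atTop, C < |p.eval x| := htend.eventually_gt_atTop C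
  obtain ⟨x, hx1, hx2⟩ := (hC.and h2).exists
  linarith

lemma inv_isBigO_one : (fun z : ℝ => z⁻¹) =O[atTop] (fun _ : ℝ => (1 : ℝ)) := by
  rw [Asymptotics.isBigO_iff]
  refine ⟨1, ?_⟩
  filter_upwards [eventually_ge_atTop (1:ℝ)] with z hz
  rw [Real.norm_eq_abs, abs_inv, abs_of_pos (by linarith), norm_one, mul_one]
  rw [inv_le_one_iff₀]
  right; exact hz

lemma poly_isBigO_inv_eq_zero {p : Polynomial ℝ}
    (h : (fun z => p.eval z) =O[atTop] (fun z : ℝ => z⁻¹)) : p = 0 := by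
  have hp := poly_isBigO_one_eq_C (h.trans inv_isBigO_one)
  have htend0 : Tendsto (fun z => p.eval z) atTop (nhds 0) :=
    h.trans_tendsto tendsto_inv_atTop_zero
  have : p.coeff 0 = 0 := by
    have : Tendsto (fun _ : ℝ => p.coeff 0) atTop (nhds (p.coeff 0)) := tendsto_const_nhds
    refine tendsto_nhds_unique ?_ htend0
    rw [hp]
    simpa using this.congr (fun z => by rw [Polynomial.eval_C])
  rw [hp, this, map_zero]


noncomputable def polyPart (mm : ℕ) (lam co : Fin mm → ℝ) (Q : Polynomial ℝ) : Polynomial ℝ :=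
  ∑ a, Polynomial.C (co a) * (Q /ₘ (Polynomial.X - Polynomial.C (lam a)))

lemma key_div (Q : Polynomial ℝ) (t : ℝ) :
    Q = Polynomial.C (Q.eval t)
      + (Polynomial.X - Polynomial.C t) * (Q /ₘ (Polynomial.X - Polynomial.C t)) := by
  conv_lhs => rw [← Polynomial.modByMonic_add_div Q (Polynomial.X - Polynomial.C t)]
  rw [Polynomial.modByMonic_X_sub_C_eq_C_eval]

lemma key_div_eval (Q : Polynomial ℝ) (t z : ℝ) :
    Q.eval z = Q.eval t + (z - t) * (Q /ₘ (Polynomial.X - Polynomial.C t)).eval z := by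
  conv_lhs => rw [key_div Q t]
  simp [Polynomial.eval_add, Polynomial.eval_mul]

lemma key_divX_eval (Q : Polynomial ℝ) (hQ0 : Q.eval 0 = 0) (z : ℝ) :
    Q.eval z = z * (Q /ₘ Polynomial.X).eval z := by
  conv_lhs => rw [← Polynomial.modByMonic_add_div Q Polynomial.X]
  rw [Polynomial.modByMonic_X, hQ0]
  simp [Polynomial.eval_add, Polynomial.eval_mul]

lemma divByMonic_XsubC_natDegree_le (Q : Polynomial ℝ) (t : ℝ) (k : ℕ) (hdeg : Q.natDegree ≤ k) :
    (Q /ₘ (Polynomial.X - Polynomial.C t)).natDegree ≤ k - 1 := by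
  rw [Polynomial.natDegree_divByMonic Q (Polynomial.monic_X_sub_C t),
    Polynomial.natDegree_X_sub_C]
  omega

lemma divByMonic_X_natDegree_le (Q : Polynomial ℝ) (k : ℕ) (hdeg : Q.natDegree ≤ k) :
    (Q /ₘ Polynomial.X).natDegree ≤ k - 1 := by
  rw [Polynomial.natDegree_divByMonic Q Polynomial.monic_X, Polynomial.natDegree_X]
  omega

lemma polyPart_natDegree_le (mm : ℕ) (lam co : Fin mm → ℝ) (Q : Polynomial ℝ) (k : ℕ)
    (hdeg : Q.natDegree ≤ k) : (polyPart mm lam co Q).natDegree ≤ k - 1 := by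
  refine Polynomial.natDegree_sum_le_of_forall_le _ _ fun a _ => ?_
  refine le_trans (Polynomial.natDegree_C_mul_le _ _) ?_
  exact divByMonic_XsubC_natDegree_le Q (lam a) k hdeg

lemma divByMonic_XsubC_eval0 (Q : Polynomial ℝ) (t : ℝ) (ht : t ≠ 0) (hQ0 : Q.eval 0 = 0) :
    (Q /ₘ (Polynomial.X - Polynomial.C t)).eval 0 = Q.eval t / t := by
  have h := key_div_eval Q t 0
  rw [hQ0] at h
  field_simp
  linarith

lemma polyPart_eval0 (mm : ℕ) (lam co : Fin mm → ℝ) (Q : Polynomial ℝ)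
    (hQ0 : Q.eval 0 = 0) (hlam : ∀ a, lam a ≠ 0) :
    (polyPart mm lam co Q).eval 0 = ∑ a, co a * Q.eval (lam a) / lam a := by
  rw [polyPart, Polynomial.eval_finset_sum]
  refine Finset.sum_congr rfl fun a _ => ?_
  rw [Polynomial.eval_mul, Polynomial.eval_C, divByMonic_XsubC_eval0 Q (lam a) (hlam a) hQ0,
    mul_div_assoc]

lemma polyPart_eval_identity (mm : ℕ) (lam co : Fin mm → ℝ) (Q : Polynomial ℝ) (z : ℝ)
    (hz : ∀ a, z ≠ lam a) :
    Q.eval z * (∑ a, co a / (z - lam a)) - (polyPart mm lam co Q).eval z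
      = ∑ a, co a * Q.eval (lam a) / (z - lam a) := by
  rw [polyPart, Polynomial.eval_finset_sum, Finset.mul_sum, ← Finset.sum_sub_distrib]
  refine Finset.sum_congr rfl fun a _ => ?_
  have hza : z - lam a ≠ 0 := sub_ne_zero.2 (hz a)
  rw [Polynomial.eval_mul, Polynomial.eval_C]
  rw [key_div_eval Q (lam a) z]
  field_simp
  ring

lemma QZ_identity (mm : ℕ) (lam c : Fin mm → ℝ) (M : ℝ) (Q : Polynomial ℝ)
    (hQ0 : Q.eval 0 = 0) (z : ℝ) (hz0 : z ≠ 0) (hz : ∀ a, z ≠ lam a) :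
    Q.eval z * (-(1 / (2 * M * z)) + ∑ a, c a / (z - lam a))
      - (Polynomial.C (-(1 / (2 * M))) * (Q /ₘ Polynomial.X) + polyPart mm lam c Q).eval z
      = ∑ a, c a * Q.eval (lam a) / (z - lam a) := by
  have h1 := polyPart_eval_identity mm lam c Q z hz
  have h3 : Q.eval z * (-(1 / (2 * M * z))) = -(1 / (2 * M)) * (Q /ₘ Polynomial.X).eval z := by
    rw [key_divX_eval Q hQ0 z]
    by_cases hM : M = 0
    · simp [hM]
    · field_simp
  simp only [Polynomial.eval_add, Polynomial.eval_mul, Polynomial.eval_C]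
  rw [mul_add]
  linarith [h1, h3]

lemma evalQ (k : ℕ) (Q : Polynomial ℝ) (hdeg : Q.natDegree ≤ k) (hQ0 : Q.eval 0 = 0) (x : ℝ) :
    Q.eval x = ∑ j : Fin k, Q.coeff ((j : ℕ) + 1) * x ^ ((j : ℕ) + 1) := by
  have h1 : Q.eval x = ∑ i ∈ Finset.range (k + 1), Q.coeff i * x ^ i :=
    Polynomial.eval_eq_sum_range' (Nat.lt_succ_of_le hdeg) x
  have h0 : Q.coeff 0 = 0 := by rwa [Polynomial.coeff_zero_eq_eval_zero]
  rw [h1, Finset.sum_range_succ', h0, zero_mul, add_zero, ← Fin.sum_univ_eq_sum_range]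

lemma Isym (mm : ℕ) (lam b : Fin mm → ℝ) (hpos : ∀ i, 0 < lam i)
    (β : ℕ → ℝ) (hβ : ∀ j, β j = ∑ a, b a * lam a ^ j)
    (I : ℕ → ℕ → ℝ)
    (hI : ∀ i j, I i j = ∑ a, ∑ d, b a * b d * lam a ^ i * lam d ^ j / (lam a + lam d))
    (i j : ℕ) : I (i + 1) j + I (j + 1) i = β i * β j := by
  rw [hI, hI, hβ, hβ, Finset.sum_mul_sum]
  have hswap : ∑ a, ∑ d, b a * b d * lam a ^ (j + 1) * lam d ^ i / (lam a + lam d)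
      = ∑ a, ∑ d, b d * b a * lam d ^ (j + 1) * lam a ^ i / (lam d + lam a) := Finset.sum_comm
  rw [hswap, ← Finset.sum_add_distrib]
  refine Finset.sum_congr rfl fun a _ => ?_
  rw [← Finset.sum_add_distrib]
  refine Finset.sum_congr rfl fun d _ => ?_
  have hs : lam a + lam d ≠ 0 := ne_of_gt (by have := hpos a; have := hpos d; linarith)
  have hcomm : lam d + lam a = lam a + lam d := add_comm _ _
  rw [hcomm]
  field_simp
  ring

lemma Zsym_identity (mm : ℕ) (lam b c : Fin mm → ℝ)
    (hc : ∀ i, c i = -∑ j, b j * b i / (lam j + lam i))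
    (hpos : ∀ i, 0 < lam i) (M : ℝ) (z : ℝ) (hz0 : 0 < z) (hz : ∀ a, lam a < z) :
    -(1 / (2 * M * (-z))) + ∑ a, c a / (-z - lam a)
      = (∑ a, b a / (z - lam a)) * (∑ a, b a / (-z - lam a))
        - (-(1 / (2 * M * z)) + ∑ a, c a / (z - lam a)) := by
  have hMterm : -(1 / (2 * M * (-z))) = 1 / (2 * M * z) := by
    rw [mul_neg, div_neg, neg_neg]
  have core : (∑ a, c a / (-z - lam a)) + (∑ a, c a / (z - lam a))
      = (∑ a, b a / (z - lam a)) * (∑ a, b a / (-z - lam a)) := by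
    have e1 : ∀ a, c a / (-z - lam a)
        = ∑ d, b d * b a / ((lam d + lam a) * (z + lam a)) := by
      intro a
      have hne : -z - lam a = -(z + lam a) := by ring
      rw [hne, div_neg, hc a, neg_div, neg_neg, Finset.sum_div]
      exact Finset.sum_congr rfl fun d _ => div_div _ _ _
    have e2 : ∀ a, c a / (z - lam a)
        = -∑ d, b d * b a / ((lam d + lam a) * (z - lam a)) := by
      intro a
      rw [hc a, neg_div, Finset.sum_div, neg_inj]
      exact Finset.sum_congr rfl fun d _ => div_div _ _ _
    rw [Finset.sum_congr rfl fun a _ => e1 a, Finset.sum_congr rfl fun a _ => e2 a,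
      Finset.sum_mul_sum]
    rw [Finset.sum_neg_distrib, ← sub_eq_add_neg]
    have hswap : (∑ a, ∑ d, b d * b a / ((lam d + lam a) * (z + lam a)))
        = ∑ a, ∑ d, b a * b d / ((lam a + lam d) * (z + lam d)) := Finset.sum_comm
    rw [hswap, ← Finset.sum_sub_distrib]
    refine Finset.sum_congr rfl fun a _ => ?_
    rw [← Finset.sum_sub_distrib]
    refine Finset.sum_congr rfl fun d _ => ?_
    have hs : lam a + lam d ≠ 0 := ne_of_gt (by have := hpos a; have := hpos d; linarith)
    have hza : z - lam a ≠ 0 := ne_of_gt (by have := hz a; linarith)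
    have hzd : z + lam d ≠ 0 := ne_of_gt (by have := hpos d; linarith)
    have hzd' : -z - lam d = -(z + lam d) := by ring
    have hda : lam d + lam a = lam a + lam d := add_comm _ _
    rw [hzd', div_neg, mul_neg, div_mul_div_comm, hda]
    rw [div_sub_div _ _ (mul_ne_zero hs hzd) (mul_ne_zero hs hza), ← neg_div,
      div_eq_div_iff (mul_ne_zero (mul_ne_zero hs hzd) (mul_ne_zero hs hza))
        (mul_ne_zero hza hzd)]
    ring
  linarith [core, hMterm]

lemma E3_identity (mm : ℕ) (lam b c : Fin mm → ℝ)
    (hc : ∀ i, c i = -∑ j, b j * b i / (lam j + lam i))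
    (hpos : ∀ i, 0 < lam i) (u : Fin mm → ℝ) (γ : ℝ) (z : ℝ)
    (hz0 : 0 < z) (hz : ∀ a, lam a < z) :
    (-∑ a, c a * u a / (z - lam a))
      + (-∑ d, b d / (z + lam d)) * ((∑ a, b a * u a / (z - lam a)) + γ)
      = ∑ d, (b d * ((∑ a, b a * u a / (lam a + lam d)) - γ)) / (z + lam d) := by
  have eRHS : ∀ d, (b d * ((∑ a, b a * u a / (lam a + lam d)) - γ)) / (z + lam d)
      = (∑ a, b a * b d * u a / ((lam a + lam d) * (z + lam d))) - γ * (b d / (z + lam d)) := by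
    intro d
    rw [mul_sub, sub_div, Finset.mul_sum, Finset.sum_div]
    congr 1
    · exact Finset.sum_congr rfl fun a _ => by rw [← mul_div_assoc, div_div]; ring
    · ring
  rw [Finset.sum_congr rfl fun d _ => eRHS d, Finset.sum_sub_distrib]
  have eL1 : (-∑ a, c a * u a / (z - lam a))
      = ∑ a, ∑ d, b d * b a * u a / ((lam d + lam a) * (z - lam a)) := by
    rw [← Finset.sum_neg_distrib]
    refine Finset.sum_congr rfl fun a _ => ?_
    rw [hc a, neg_mul, neg_div, neg_neg, Finset.sum_mul, Finset.sum_div]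
    refine Finset.sum_congr rfl fun d _ => ?_
    rw [div_mul_eq_mul_div, div_div]
  have expand : (∑ d, b d / (z + lam d)) * (∑ a, b a * u a / (z - lam a))
      = ∑ d, ∑ a, b d * (b a * u a) / ((z + lam d) * (z - lam a)) := by
    rw [Finset.sum_mul_sum]
    exact Finset.sum_congr rfl fun d _ => Finset.sum_congr rfl fun a _ =>
      div_mul_div_comm _ _ _ _
  have eL2 : (-∑ d, b d / (z + lam d)) * ((∑ a, b a * u a / (z - lam a)) + γ)
      = (-∑ d, ∑ a, b d * (b a * u a) / ((z + lam d) * (z - lam a)))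
        - γ * ∑ d, b d / (z + lam d) := by
    rw [← expand]
    ring
  rw [eL1, eL2, Finset.mul_sum]
  have hswap : ∑ a, ∑ d, b d * b a * u a / ((lam d + lam a) * (z - lam a))
      = ∑ d, ∑ a, b d * b a * u a / ((lam d + lam a) * (z - lam a)) := Finset.sum_comm
  rw [hswap]
  have main : (∑ d, ∑ a, b d * b a * u a / ((lam d + lam a) * (z - lam a)))
      - ∑ d, ∑ a, b d * (b a * u a) / ((z + lam d) * (z - lam a))
      = ∑ d, ∑ a, b a * b d * u a / ((lam a + lam d) * (z + lam d)) := by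
    rw [← Finset.sum_sub_distrib]
    refine Finset.sum_congr rfl fun d _ => ?_
    rw [← Finset.sum_sub_distrib]
    refine Finset.sum_congr rfl fun a _ => ?_
    have hs : lam a + lam d ≠ 0 := ne_of_gt (by have := hpos a; have := hpos d; linarith)
    have hza : z - lam a ≠ 0 := ne_of_gt (by have := hz a; linarith)
    have hzd : z + lam d ≠ 0 := ne_of_gt (by have := hpos d; have := hz0; linarith)
    have hda : lam d + lam a = lam a + lam d := add_comm _ _
    rw [hda, div_sub_div _ _ (mul_ne_zero hs hza) (mul_ne_zero hzd hza),
      div_eq_div_iff (mul_ne_zero (mul_ne_zero hs hza) (mul_ne_zero hzd hza))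
        (mul_ne_zero hs hzd)]
    ring
  linarith [main]

lemma moments_formula (mm : ℕ) (lam b : Fin mm → ℝ) (hpos : ∀ i, 0 < lam i)
    (β : ℕ → ℝ) (hβ : ∀ j, β j = ∑ a, b a * lam a ^ j)
    (I : ℕ → ℕ → ℝ)
    (hI : ∀ i j, I i j = ∑ a, ∑ d, b a * b d * lam a ^ i * lam d ^ j / (lam a + lam d))
    (k : ℕ) (Q : Polynomial ℝ) (hdeg : Q.natDegree ≤ k) (hQ0 : Q.eval 0 = 0) (m : ℕ) :
    ∑ d, (b d * ((∑ a, b a * Q.eval (lam a) / (lam a + lam d))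
        - ((∑ a, b a * Q.eval (lam a) / lam a) - 1))) * lam d ^ m
      = β m - ∑ j : Fin k, I (m + 1) (j : ℕ) * Q.coeff ((j : ℕ) + 1) := by
  have hlam0 : ∀ a : Fin mm, lam a ≠ 0 := fun a => ne_of_gt (hpos a)
  have hueq : ∀ a : Fin mm, Q.eval (lam a)
      = ∑ j : Fin k, Q.coeff ((j : ℕ) + 1) * lam a ^ ((j : ℕ) + 1) :=
    fun a => evalQ k Q hdeg hQ0 (lam a)
  have hL : ∀ d : Fin mm, (b d * ((∑ a, b a * Q.eval (lam a) / (lam a + lam d))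
        - ((∑ a, b a * Q.eval (lam a) / lam a) - 1))) * lam d ^ m
      = (∑ a, b a * b d * Q.eval (lam a) * lam d ^ m / (lam a + lam d))
        - ((∑ a, b a * Q.eval (lam a) / lam a) - 1) * (b d * lam d ^ m) := by
    intro d
    rw [mul_sub, sub_mul, Finset.mul_sum, Finset.sum_mul]
    congr 1
    · exact Finset.sum_congr rfl fun a _ => by ring
    · ring
  rw [Finset.sum_congr rfl fun d _ => hL d, Finset.sum_sub_distrib]
  have hβm : ∑ d, ((∑ a, b a * Q.eval (lam a) / lam a) - 1) * (b d * lam d ^ m)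
      = ((∑ a, b a * Q.eval (lam a) / lam a) - 1) * β m := by
    rw [← Finset.mul_sum, hβ]
  have hγ : (∑ a, b a * Q.eval (lam a) / lam a)
      = ∑ j : Fin k, Q.coeff ((j : ℕ) + 1) * β (j : ℕ) := by
    have h1 : ∀ a : Fin mm, b a * Q.eval (lam a) / lam a
        = ∑ j : Fin k, Q.coeff ((j : ℕ) + 1) * (b a * lam a ^ (j : ℕ)) := by
      intro a
      rw [hueq a, Finset.mul_sum, Finset.sum_div]
      refine Finset.sum_congr rfl fun j _ => ?_
      rw [pow_succ,
        show b a * (Q.coeff ((j : ℕ) + 1) * (lam a ^ (j : ℕ) * lam a))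
          = Q.coeff ((j : ℕ) + 1) * (b a * lam a ^ (j : ℕ)) * lam a by ring,
        mul_div_cancel_right₀ _ (hlam0 a)]
    rw [Finset.sum_congr rfl fun a _ => h1 a, Finset.sum_comm]
    exact Finset.sum_congr rfl fun j _ => by rw [← Finset.mul_sum, hβ]
  have hfirst : ∑ d, ∑ a, b a * b d * Q.eval (lam a) * lam d ^ m / (lam a + lam d)
      = ∑ j : Fin k, Q.coeff ((j : ℕ) + 1) * I ((j : ℕ) + 1) m := by
    rw [Finset.sum_comm]
    have h2 : ∀ (a d : Fin mm), b a * b d * Q.eval (lam a) * lam d ^ m / (lam a + lam d)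
        = ∑ j : Fin k, Q.coeff ((j : ℕ) + 1)
            * (b a * b d * lam a ^ ((j : ℕ) + 1) * lam d ^ m / (lam a + lam d)) := by
      intro a d
      rw [show b a * b d * Q.eval (lam a) * lam d ^ m / (lam a + lam d)
          = Q.eval (lam a) * (b a * b d * lam d ^ m / (lam a + lam d)) by ring, hueq a,
        Finset.sum_mul]
      exact Finset.sum_congr rfl fun j _ => by ring
    rw [Finset.sum_congr rfl fun a _ => Finset.sum_congr rfl fun d _ => h2 a d]
    rw [Finset.sum_congr rfl fun a _ => Finset.sum_comm, Finset.sum_comm]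
    refine Finset.sum_congr rfl fun j _ => ?_
    rw [hI]
    rw [Finset.sum_congr rfl fun a _ => (Finset.mul_sum _ _ _).symm, ← Finset.mul_sum]
  rw [hfirst, hβm, hγ]
  have hIs : ∀ j : Fin k, I ((j : ℕ) + 1) m = β (j : ℕ) * β m - I (m + 1) (j : ℕ) :=
    fun j => by linarith [Isym mm lam b hpos β hβ I hI (j : ℕ) m]
  rw [Finset.sum_congr rfl fun j (_ : j ∈ Finset.univ) => by rw [hIs j, mul_sub],
    Finset.sum_sub_distrib]
  have e1 : ∑ j : Fin k, Q.coeff ((j : ℕ) + 1) * (β (j : ℕ) * β m)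
      = (∑ j : Fin k, Q.coeff ((j : ℕ) + 1) * β (j : ℕ)) * β m := by
    rw [Finset.sum_mul]
    exact Finset.sum_congr rfl fun j _ => (mul_assoc _ _ _).symm
  have e2 : ∑ j : Fin k, Q.coeff ((j : ℕ) + 1) * I (m + 1) (j : ℕ)
      = ∑ j : Fin k, I (m + 1) (j : ℕ) * Q.coeff ((j : ℕ) + 1) :=
    Finset.sum_congr rfl fun j _ => mul_comm _ _
  linear_combination e1 - e2
lemma vandermonde_pos {k : ℕ} (x : Fin k → ℝ) (hx : StrictMono x) :
    0 < ∏ i : Fin k, ∏ j ∈ Finset.Ioi i, (x j - x i) :=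
  Finset.prod_pos fun i _ => Finset.prod_pos fun j hj =>
    sub_pos.2 (hx (Finset.mem_Ioi.1 hj))

lemma monoFuns_nonempty {k m : ℕ} (hk : k ≤ m) : (monoFuns k m).Nonempty := by
  classical
  refine ⟨Fin.castLE hk, ?_⟩
  simp only [monoFuns, Finset.mem_filter, Finset.mem_univ, true_and]
  exact Fin.strictMono_castLE hk

lemma Amat_det_pos (mm : ℕ) (lam b : Fin mm → ℝ) (hmono : StrictMono lam)
    (hpos : ∀ i, 0 < lam i) (hb : ∀ i, b i < 0)
    (I : ℕ → ℕ → ℝ)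
    (hI : ∀ i j, I i j = ∑ a, ∑ d, b a * b d * lam a ^ i * lam d ^ j / (lam a + lam d))
    (k : ℕ) (hk : k ≤ mm) :
    0 < (Matrix.of fun (i j : Fin k) => I ((i : ℕ) + 1) (j : ℕ)).det := by
  classical
  set U : Matrix (Fin k) (Fin mm) ℝ := Matrix.of fun i a => b a * lam a ^ ((i : ℕ) + 1) with hU
  set N : Matrix (Fin mm) (Fin k) ℝ :=
    Matrix.of fun a j => ∑ d, (lam a + lam d)⁻¹ * (b d * lam d ^ (j : ℕ)) with hN
  have hA : (Matrix.of fun (i j : Fin k) => I ((i : ℕ) + 1) (j : ℕ)) = U * N := by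
    ext i j
    rw [Matrix.of_apply, hI, Matrix.mul_apply]
    refine Finset.sum_congr rfl fun a _ => ?_
    simp only [hU, hN, Matrix.of_apply]
    rw [Finset.mul_sum]
    refine Finset.sum_congr rfl fun d _ => ?_
    rw [div_eq_mul_inv]
    ring
  rw [hA, cauchy_binet]
  refine Finset.sum_pos ?_ (monoFuns_nonempty hk)
  intro f hf
  have hfm : StrictMono f := by
    simpa [monoFuns] using hf
  have hUdet : (U.submatrix id f).det
      = (∏ j, b (f j) * lam (f j)) * ∏ i : Fin k, ∏ j ∈ Finset.Ioi i, (lam (f j) - lam (f i)) := by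
    have h1 : U.submatrix id f
        = Matrix.of fun i j => (b (f j) * lam (f j)) * ((Matrix.vandermonde (fun j' => lam (f j')))ᵀ i j) := by
      ext i j
      simp only [Matrix.submatrix_apply, id_eq, hU, Matrix.of_apply, Matrix.transpose_apply,
        Matrix.vandermonde]
      rw [pow_succ]
      ring
    rw [h1, Matrix.det_mul_row, Matrix.det_transpose, Matrix.det_vandermonde]
  have hNdet : (N.submatrix f id).det
      = ∑ g ∈ monoFuns k mm,
          (Matrix.of fun (i j : Fin k) => (lam (f i) + lam (g j))⁻¹).det
            * ((∏ i, b (g i)) * ∏ i : Fin k, ∏ j ∈ Finset.Ioi i, (lam (g j) - lam (g i))) := by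
    have h2 : N.submatrix f id
        = (Matrix.of fun (i : Fin k) (d : Fin mm) => (lam (f i) + lam d)⁻¹)
          * (Matrix.of fun (d : Fin mm) (j : Fin k) => b d * lam d ^ (j : ℕ)) := by
      ext i j
      simp [hN, Matrix.mul_apply]
    rw [h2, cauchy_binet]
    refine Finset.sum_congr rfl fun g hg => ?_
    have hgm : StrictMono g := by simpa [monoFuns] using hg
    have h4 : (Matrix.of fun (i : Fin k) (d : Fin mm) => (lam (f i) + lam d)⁻¹).submatrix id g
        = Matrix.of fun (i j : Fin k) => (lam (f i) + lam (g j))⁻¹ := by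
      ext i j
      simp
    have h3 : (Matrix.of fun (d : Fin mm) (j : Fin k) => b d * lam d ^ (j : ℕ)).submatrix g id
        = Matrix.of fun i j => b (g i) * ((Matrix.vandermonde (fun i' => lam (g i'))) i j) := by
      ext i j
      simp [Matrix.vandermonde]
    rw [h4, h3, Matrix.det_mul_column, Matrix.det_vandermonde]
  rw [hUdet, hNdet, Finset.mul_sum]
  refine Finset.sum_pos ?_ (monoFuns_nonempty hk)
  intro g hg
  have hgm : StrictMono g := by simpa [monoFuns] using hg
  have hbb : 0 < (∏ j, b (f j)) * (∏ i, b (g i)) := by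
    rw [← Finset.prod_mul_distrib]
    exact Finset.prod_pos fun j _ => mul_pos_of_neg_of_neg (hb _) (hb _)
  have hlf : 0 < ∏ j, lam (f j) := Finset.prod_pos fun j _ => hpos _
  have hVf : 0 < ∏ i : Fin k, ∏ j ∈ Finset.Ioi i, (lam (f j) - lam (f i)) :=
    vandermonde_pos _ (hmono.comp hfm)
  have hVg : 0 < ∏ i : Fin k, ∏ j ∈ Finset.Ioi i, (lam (g j) - lam (g i)) :=
    vandermonde_pos _ (hmono.comp hgm)
  have hC : 0 < (Matrix.of fun (i j : Fin k) => (lam (f i) + lam (g j))⁻¹).det :=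
    cauchy_det_pos k (fun i => lam (f i)) (fun j => lam (g j)) (hmono.comp hfm)
      (hmono.comp hgm) (fun i j => by have := hpos (f i); have := hpos (g j); linarith)
  have hsplit : (∏ j, b (f j) * lam (f j)) = (∏ j, b (f j)) * ∏ j, lam (f j) :=
    Finset.prod_mul_distrib
  rw [hsplit]
  rw [show (∏ j, b (f j)) * (∏ j, lam (f j))
        * (∏ i : Fin k, ∏ j ∈ Finset.Ioi i, (lam (f j) - lam (f i)))
      * ((Matrix.of fun (i j : Fin k) => (lam (f i) + lam (g j))⁻¹).det
        * ((∏ i, b (g i)) * ∏ i : Fin k, ∏ j ∈ Finset.Ioi i, (lam (g j) - lam (g i))))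
      = ((∏ j, b (f j)) * (∏ i, b (g i)))
        * ((∏ j, lam (f j)) * (∏ i : Fin k, ∏ j ∈ Finset.Ioi i, (lam (f j) - lam (f i)))
          * (Matrix.of fun (i j : Fin k) => (lam (f i) + lam (g j))⁻¹).det
          * ∏ i : Fin k, ∏ j ∈ Finset.Ioi i, (lam (g j) - lam (g i))) from by ring]
  exact mul_pos hbb (mul_pos (mul_pos (mul_pos hlf hVf) hC) hVg)
set_option maxHeartbeats 1600000 in
/-- **The Type II simultaneous rational approximation problem.**
Given spectral data `0 < λ_1 < ⋯ < λ_{n−1}`, `b_i < 0`, `M > 0`, with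
`c_i = −Σ_j b_j b_i/(λ_j + λ_i)`, `W(z) = Σ b_i/(z − λ_i)`,
`Z(z) = −1/(2Mz) + Σ c_i/(z − λ_i)`, `W*(z) = −W(−z)`, `Z*(z) = Z(−z)`:
for fixed `1 ≤ k ≤ n−1` there are unique polynomials `Q, P, P̂` of degrees
`≤ k, k−1, k−1` with `Q(0) = 0`, `P(0) = 1` such that `QZ − P̂ = O(z⁻¹)`,
`QW − P = O(1)` and `P̂ + P W* + Q Z* = O(z^{−(k+1)})` as `z → ∞`; moreover the
coefficients `q_j = Q.coeff j` satisfy `Σ_{j=1}^k I_{i,j−1} q_j = β_{i−1}`,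
where `β_j = Σ_a b_a λ_a^j` and `I_{ij} = Σ_{a,d} b_a b_d λ_a^i λ_d^j/(λ_a + λ_d)`. -/
theorem stmt15 (n : ℕ) (hn : 2 ≤ n) (lam b : Fin (n - 1) → ℝ)
    (hmono : StrictMono lam) (hpos : ∀ i, 0 < lam i) (hb : ∀ i, b i < 0)
    (M : ℝ) (hM : 0 < M) (k : ℕ) (hk1 : 1 ≤ k) (hk2 : k ≤ n - 1)
    (c : Fin (n - 1) → ℝ)
    (hc : ∀ i, c i = -∑ j, b j * b i / (lam j + lam i))
    (W Z Ws Zs : ℝ → ℝ)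
    (hW : ∀ z, W z = ∑ i, b i / (z - lam i))
    (hZ : ∀ z, Z z = -(1 / (2 * M * z)) + ∑ i, c i / (z - lam i))
    (hWs : ∀ z, Ws z = -W (-z)) (hZs : ∀ z, Zs z = Z (-z))
    (β : ℕ → ℝ) (hβ : ∀ j, β j = ∑ a, b a * lam a ^ j)
    (I : ℕ → ℕ → ℝ)
    (hI : ∀ i j, I i j = ∑ a, ∑ d, b a * b d * lam a ^ i * lam d ^ j / (lam a + lam d)) :
    (∃! QPP : Polynomial ℝ × Polynomial ℝ × Polynomial ℝ,
      QPP.1.natDegree ≤ k ∧ QPP.2.1.natDegree ≤ k - 1 ∧ QPP.2.2.natDegree ≤ k - 1 ∧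
      QPP.1.eval 0 = 0 ∧ QPP.2.1.eval 0 = 1 ∧
      (fun z => QPP.1.eval z * Z z - QPP.2.2.eval z) =O[atTop] (fun z : ℝ => z⁻¹) ∧
      (fun z => QPP.1.eval z * W z - QPP.2.1.eval z) =O[atTop] (fun _ : ℝ => (1 : ℝ)) ∧
      (fun z => QPP.2.2.eval z + QPP.2.1.eval z * Ws z + QPP.1.eval z * Zs z)
        =O[atTop] (fun z : ℝ => (z ^ (k + 1))⁻¹)) ∧
    (∀ Q P Phat : Polynomial ℝ,
      Q.natDegree ≤ k → P.natDegree ≤ k - 1 → Phat.natDegree ≤ k - 1 →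
      Q.eval 0 = 0 → P.eval 0 = 1 →
      (fun z => Q.eval z * Z z - Phat.eval z) =O[atTop] (fun z : ℝ => z⁻¹) →
      (fun z => Q.eval z * W z - P.eval z) =O[atTop] (fun _ : ℝ => (1 : ℝ)) →
      (fun z => Phat.eval z + P.eval z * Ws z + Q.eval z * Zs z)
        =O[atTop] (fun z : ℝ => (z ^ (k + 1))⁻¹) →
      ∀ i : Fin k, ∑ j : Fin k, I ((i : ℕ) + 1) (j : ℕ) * Q.coeff ((j : ℕ) + 1)
        = β (i : ℕ)) := by
  classical
  have hlamne : ∀ a : Fin (n - 1), lam a ≠ 0 := fun a => ne_of_gt (hpos a)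
  -- eventual largeness
  have hev : ∀ᶠ z : ℝ in atTop, 0 < z ∧ ∀ a : Fin (n - 1), lam a < z :=
    (eventually_gt_atTop 0).and (Filter.eventually_all.2 fun a => eventually_gt_atTop (lam a))
  -- eventual identities
  have hQZ : ∀ Q : Polynomial ℝ, Q.eval 0 = 0 →
      (fun z => Q.eval z * Z z
          - (Polynomial.C (-(1 / (2 * M))) * (Q /ₘ Polynomial.X) + polyPart (n - 1) lam c Q).eval z)
        =ᶠ[atTop] (fun z => ∑ a, c a * Q.eval (lam a) / (z - lam a)) := by
    intro Q hQ0
    filter_upwards [hev] with z hz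
    rw [hZ z]
    exact QZ_identity (n - 1) lam c M Q hQ0 z hz.1.ne' (fun a => (hz.2 a).ne')
  have hQW : ∀ Q : Polynomial ℝ,
      (fun z => Q.eval z * W z - (polyPart (n - 1) lam b Q).eval z)
        =ᶠ[atTop] (fun z => ∑ a, b a * Q.eval (lam a) / (z - lam a)) := by
    intro Q
    filter_upwards [hev] with z hz
    rw [hW z]
    exact polyPart_eval_identity (n - 1) lam b Q z (fun a => (hz.2 a).ne')
  have hEXPR : ∀ Q : Polynomial ℝ, Q.eval 0 = 0 →
      (fun z => (Polynomial.C (-(1 / (2 * M))) * (Q /ₘ Polynomial.X) + polyPart (n - 1) lam c Q).eval z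
          + (polyPart (n - 1) lam b Q + Polynomial.C (1 - (polyPart (n - 1) lam b Q).eval 0)).eval z * Ws z
          + Q.eval z * Zs z)
        =ᶠ[atTop] (fun z => ∑ d, (b d * ((∑ a, b a * Q.eval (lam a) / (lam a + lam d))
            - ((∑ a, b a * Q.eval (lam a) / lam a) - 1))) / (z + lam d)) := by
    intro Q hQ0
    filter_upwards [hev] with z hz
    obtain ⟨hz0, hzl⟩ := hz
    have hzne : ∀ a : Fin (n - 1), z ≠ lam a := fun a => (hzl a).ne'
    have h1 : Q.eval z * Z z
        - (Polynomial.C (-(1 / (2 * M))) * (Q /ₘ Polynomial.X) + polyPart (n - 1) lam c Q).eval z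
        = ∑ a, c a * Q.eval (lam a) / (z - lam a) := by
      rw [hZ z]; exact QZ_identity (n - 1) lam c M Q hQ0 z hz0.ne' hzne
    have h2 : Q.eval z * W z - (polyPart (n - 1) lam b Q).eval z
        = ∑ a, b a * Q.eval (lam a) / (z - lam a) := by
      rw [hW z]; exact polyPart_eval_identity (n - 1) lam b Q z hzne
    have h3 : W (-z) = -∑ d, b d / (z + lam d) := by
      rw [hW (-z), ← Finset.sum_neg_distrib]
      refine Finset.sum_congr rfl fun d _ => ?_
      rw [show -z - lam d = -(z + lam d) by ring, div_neg]
    have h4 : Z (-z) = W z * W (-z) - Z z := by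
      rw [hZ (-z), hZ z, hW z, hW (-z)]
      exact Zsym_identity (n - 1) lam b c hc hpos M z hz0 hzl
    have h5 := E3_identity (n - 1) lam b c hc hpos (fun a => Q.eval (lam a))
        ((∑ a, b a * Q.eval (lam a) / lam a) - 1) z hz0 hzl
    have hγ : (polyPart (n - 1) lam b Q).eval 0 = ∑ a, b a * Q.eval (lam a) / lam a :=
      polyPart_eval0 (n - 1) lam b Q hQ0 hlamne
    have hPz : (polyPart (n - 1) lam b Q
        + Polynomial.C (1 - (polyPart (n - 1) lam b Q).eval 0)).eval z
        = (polyPart (n - 1) lam b Q).eval z + (1 - ∑ a, b a * Q.eval (lam a) / lam a) := by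
      rw [Polynomial.eval_add, Polynomial.eval_C, hγ]
    rw [hWs z, hZs z, h4, h3, hPz]
    linear_combination (-1 : ℝ) * h1 - (∑ d, b d / (z + lam d)) * h2 + h5
  -- canonical O-facts
  have hO1can : ∀ Q : Polynomial ℝ, Q.eval 0 = 0 →
      (fun z => Q.eval z * Z z - (Polynomial.C (-(1 / (2 * M))) * (Q /ₘ Polynomial.X)
        + polyPart (n - 1) lam c Q).eval z) =O[atTop] (fun z : ℝ => z⁻¹) :=
    fun Q hQ0 => (pf_isBigO (fun a => c a * Q.eval (lam a)) lam).congr'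
      (hQZ Q hQ0).symm (Filter.EventuallyEq.refl _ _)
  have hO2can : ∀ Q : Polynomial ℝ,
      (fun z => Q.eval z * W z - (polyPart (n - 1) lam b Q).eval z)
        =O[atTop] (fun z : ℝ => z⁻¹) :=
    fun Q => (pf_isBigO (fun a => b a * Q.eval (lam a)) lam).congr'
      (hQW Q).symm (Filter.EventuallyEq.refl _ _)
  -- main derivation lemma
  have main2 : ∀ Q P Phat : Polynomial ℝ,
      Q.natDegree ≤ k → P.natDegree ≤ k - 1 → Phat.natDegree ≤ k - 1 →
      Q.eval 0 = 0 → P.eval 0 = 1 →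
      (fun z => Q.eval z * Z z - Phat.eval z) =O[atTop] (fun z : ℝ => z⁻¹) →
      (fun z => Q.eval z * W z - P.eval z) =O[atTop] (fun _ : ℝ => (1 : ℝ)) →
      (fun z => Phat.eval z + P.eval z * Ws z + Q.eval z * Zs z)
        =O[atTop] (fun z : ℝ => (z ^ (k + 1))⁻¹) →
      (∀ i : Fin k, ∑ j : Fin k, I ((i : ℕ) + 1) (j : ℕ) * Q.coeff ((j : ℕ) + 1) = β (i : ℕ))
        ∧ Phat = Polynomial.C (-(1 / (2 * M))) * (Q /ₘ Polynomial.X) + polyPart (n - 1) lam c Q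
        ∧ P = polyPart (n - 1) lam b Q
            + Polynomial.C (1 - (polyPart (n - 1) lam b Q).eval 0) := by
    intro Q P Phat hdQ hdP hdPh hQ0 hP0 hO1 hO2 hO3
    have hPhat : Phat = Polynomial.C (-(1 / (2 * M))) * (Q /ₘ Polynomial.X)
        + polyPart (n - 1) lam c Q := by
      have hdiff : (fun z => ((Polynomial.C (-(1 / (2 * M))) * (Q /ₘ Polynomial.X)
          + polyPart (n - 1) lam c Q) - Phat).eval z) =O[atTop] (fun z : ℝ => z⁻¹) := by
        have h := hO1.sub (hO1can Q hQ0)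
        refine h.congr' ?_ (Filter.EventuallyEq.refl _ _)
        refine Filter.Eventually.of_forall fun z => ?_
        simp only [Polynomial.eval_sub]
        ring
      have h0 := poly_isBigO_inv_eq_zero hdiff
      have := sub_eq_zero.1 h0
      exact this.symm
    have hP : P = polyPart (n - 1) lam b Q
        + Polynomial.C (1 - (polyPart (n - 1) lam b Q).eval 0) := by
      have hdiff : (fun z => (P - polyPart (n - 1) lam b Q).eval z)
          =O[atTop] (fun _ : ℝ => (1 : ℝ)) := by
        have h := ((hO2can Q).trans inv_isBigO_one).sub hO2
        refine h.congr' ?_ (Filter.EventuallyEq.refl _ _)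
        refine Filter.Eventually.of_forall fun z => ?_
        simp only [Polynomial.eval_sub]
        ring
      have hC := poly_isBigO_one_eq_C hdiff
      have h00 : (P - polyPart (n - 1) lam b Q).coeff 0
          = 1 - (polyPart (n - 1) lam b Q).eval 0 := by
        rw [Polynomial.coeff_zero_eq_eval_zero, Polynomial.eval_sub, hP0]
      rw [h00] at hC
      have := sub_eq_iff_eq_add.1 hC
      rw [this, add_comm]
    have hO3' : (fun z => ∑ d, (b d * ((∑ a, b a * Q.eval (lam a) / (lam a + lam d))
        - ((∑ a, b a * Q.eval (lam a) / lam a) - 1))) / (z - (-lam d)))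
        =O[atTop] (fun z : ℝ => (z ^ (k + 1))⁻¹) := by
      rw [hPhat, hP] at hO3
      have h := hO3.congr' (hEXPR Q hQ0) (Filter.EventuallyEq.refl _ _)
      refine h.congr' ?_ (Filter.EventuallyEq.refl _ _)
      refine Filter.Eventually.of_forall fun z => ?_
      refine Finset.sum_congr rfl fun d _ => ?_
      rw [sub_neg_eq_add]
    have hmom := pf_moments_vanish _ (fun d => -lam d) k hO3'
    have hmomlam : ∀ m < k, ∑ d, (b d * ((∑ a, b a * Q.eval (lam a) / (lam a + lam d))
        - ((∑ a, b a * Q.eval (lam a) / lam a) - 1))) * lam d ^ m = 0 := by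
      intro m hm
      have h := hmom m hm
      have heq : ∑ d, (b d * ((∑ a, b a * Q.eval (lam a) / (lam a + lam d))
          - ((∑ a, b a * Q.eval (lam a) / lam a) - 1))) * (-lam d) ^ m
          = (-1 : ℝ) ^ m * ∑ d, (b d * ((∑ a, b a * Q.eval (lam a) / (lam a + lam d))
          - ((∑ a, b a * Q.eval (lam a) / lam a) - 1))) * lam d ^ m := by
        rw [Finset.mul_sum]
        refine Finset.sum_congr rfl fun d _ => ?_
        rw [neg_pow]
        ring
      rw [heq] at h
      have hne : ((-1 : ℝ)) ^ m ≠ 0 := pow_ne_zero _ (by norm_num)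
      exact (mul_eq_zero.1 h).resolve_left hne
    refine ⟨?_, hPhat, hP⟩
    intro i
    have h := hmomlam (i : ℕ) i.2
    rw [moments_formula (n - 1) lam b hpos β hβ I hI k Q hdQ hQ0 (i : ℕ)] at h
    linarith
  -- the matrix and the solution
  have hdetpos := Amat_det_pos (n - 1) lam b hmono hpos hb I hI k hk2
  set Amat : Matrix (Fin k) (Fin k) ℝ :=
    Matrix.of fun (i j : Fin k) => I ((i : ℕ) + 1) (j : ℕ) with hAmat
  have hunit : IsUnit Amat.det := isUnit_iff_ne_zero.2 (ne_of_gt hdetpos)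
  set q : Fin k → ℝ := Amat⁻¹.mulVec (fun i : Fin k => β (i : ℕ)) with hqdef
  have hqsys : Amat.mulVec q = fun i : Fin k => β (i : ℕ) := by
    rw [hqdef, Matrix.mulVec_mulVec, Matrix.mul_nonsing_inv _ hunit, Matrix.one_mulVec]
  set Q0 : Polynomial ℝ :=
    ∑ j : Fin k, Polynomial.C (q j) * Polynomial.X ^ ((j : ℕ) + 1) with hQ0def
  have hQ0deg : Q0.natDegree ≤ k := by
    refine Polynomial.natDegree_sum_le_of_forall_le _ _ fun j _ => ?_
    refine le_trans (Polynomial.natDegree_C_mul_le _ _) ?_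
    rw [Polynomial.natDegree_X_pow]
    have := j.2
    omega
  have hQ0ev : Q0.eval 0 = 0 := by
    rw [hQ0def, Polynomial.eval_finset_sum]
    refine Finset.sum_eq_zero fun j _ => ?_
    simp
  have hQ0coeff : ∀ j : Fin k, Q0.coeff ((j : ℕ) + 1) = q j := by
    intro j
    rw [hQ0def, Polynomial.finset_sum_coeff]
    rw [Finset.sum_eq_single j]
    · simp [Polynomial.coeff_C_mul, Polynomial.coeff_X_pow]
    · intro j' _ hj'
      have hne : ¬((j : ℕ) + 1 = (j' : ℕ) + 1) := by
        intro hcc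
        exact hj' (Fin.ext (by omega))
      simp [Polynomial.coeff_C_mul, Polynomial.coeff_X_pow, hne]
      exact fun h => absurd (Fin.ext h).symm hj'
    · intro hj
      exact absurd (Finset.mem_univ j) hj
  have hQ0sys : ∀ i : Fin k,
      ∑ j : Fin k, I ((i : ℕ) + 1) (j : ℕ) * Q0.coeff ((j : ℕ) + 1) = β (i : ℕ) := by
    intro i
    have h := congrFun hqsys i
    simp only [Matrix.mulVec, dotProduct, hAmat, Matrix.of_apply] at h
    rw [← h]
    exact Finset.sum_congr rfl fun j _ => by rw [hQ0coeff j]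
  have hmom0 : ∀ m < k, ∑ d, (b d * ((∑ a, b a * Q0.eval (lam a) / (lam a + lam d))
      - ((∑ a, b a * Q0.eval (lam a) / lam a) - 1))) * lam d ^ m = 0 := by
    intro m hm
    rw [moments_formula (n - 1) lam b hpos β hβ I hI k Q0 hQ0deg hQ0ev m]
    have h := hQ0sys ⟨m, hm⟩
    simp only [] at h
    linarith [h]
  have hmomneg : ∀ m < k, ∑ d, (b d * ((∑ a, b a * Q0.eval (lam a) / (lam a + lam d))
      - ((∑ a, b a * Q0.eval (lam a) / lam a) - 1))) * (-lam d) ^ m = 0 := by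
    intro m hm
    have heq : ∑ d, (b d * ((∑ a, b a * Q0.eval (lam a) / (lam a + lam d))
        - ((∑ a, b a * Q0.eval (lam a) / lam a) - 1))) * (-lam d) ^ m
        = (-1 : ℝ) ^ m * ∑ d, (b d * ((∑ a, b a * Q0.eval (lam a) / (lam a + lam d))
        - ((∑ a, b a * Q0.eval (lam a) / lam a) - 1))) * lam d ^ m := by
      rw [Finset.mul_sum]
      refine Finset.sum_congr rfl fun d _ => ?_
      rw [neg_pow]
      ring
    rw [heq, hmom0 m hm, mul_zero]
  have hO3can : (fun z => (Polynomial.C (-(1 / (2 * M))) * (Q0 /ₘ Polynomial.X)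
      + polyPart (n - 1) lam c Q0).eval z
      + (polyPart (n - 1) lam b Q0
        + Polynomial.C (1 - (polyPart (n - 1) lam b Q0).eval 0)).eval z * Ws z
      + Q0.eval z * Zs z) =O[atTop] (fun z : ℝ => (z ^ (k + 1))⁻¹) := by
    have hO := pf_isBigO_pow (fun d => b d * ((∑ a, b a * Q0.eval (lam a) / (lam a + lam d))
        - ((∑ a, b a * Q0.eval (lam a) / lam a) - 1))) (fun d => -lam d) k hmomneg
    have hO' : (fun z => ∑ d, (b d * ((∑ a, b a * Q0.eval (lam a) / (lam a + lam d))
        - ((∑ a, b a * Q0.eval (lam a) / lam a) - 1))) / (z + lam d))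
        =O[atTop] (fun z : ℝ => (z ^ (k + 1))⁻¹) := by
      refine hO.congr' ?_ (Filter.EventuallyEq.refl _ _)
      refine Filter.Eventually.of_forall fun z => ?_
      refine Finset.sum_congr rfl fun d _ => ?_
      rw [sub_neg_eq_add]
    exact hO'.congr' (hEXPR Q0 hQ0ev).symm (Filter.EventuallyEq.refl _ _)
  -- assemble
  constructor
  · refine ⟨(Q0, polyPart (n - 1) lam b Q0
        + Polynomial.C (1 - (polyPart (n - 1) lam b Q0).eval 0),
      Polynomial.C (-(1 / (2 * M))) * (Q0 /ₘ Polynomial.X) + polyPart (n - 1) lam c Q0),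
      ⟨hQ0deg, ?_, ?_, hQ0ev, ?_, ?_, ?_, ?_⟩, ?_⟩
    · -- P degree
      refine le_trans (Polynomial.natDegree_add_le _ _) ?_
      rw [max_le_iff]
      exact ⟨polyPart_natDegree_le (n - 1) lam b Q0 k hQ0deg,
        le_trans (Polynomial.natDegree_C _).le (Nat.zero_le _)⟩
    · -- Phat degree
      refine le_trans (Polynomial.natDegree_add_le _ _) ?_
      rw [max_le_iff]
      exact ⟨le_trans (Polynomial.natDegree_C_mul_le _ _)
          (divByMonic_X_natDegree_le Q0 k hQ0deg),
        polyPart_natDegree_le (n - 1) lam c Q0 k hQ0deg⟩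
    · -- P eval 0 = 1
      simp only [Polynomial.eval_add, Polynomial.eval_C]
      ring
    · -- O1
      exact hO1can Q0 hQ0ev
    · -- O2
      have h := ((hO2can Q0).trans inv_isBigO_one).sub
        (Asymptotics.isBigO_const_const (1 - (polyPart (n - 1) lam b Q0).eval 0)
          (one_ne_zero) atTop)
      refine h.congr' ?_ (Filter.EventuallyEq.refl _ _)
      refine Filter.Eventually.of_forall fun z => ?_
      simp only [Polynomial.eval_add, Polynomial.eval_C]
      ring
    · -- O3
      exact hO3can
    · -- uniqueness
      rintro ⟨Q', P', Ph'⟩ ⟨h1, h2, h3, h4, h5, h6, h7, h8⟩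
      obtain ⟨hsys', hPh'eq, hP'eq⟩ := main2 Q' P' Ph' h1 h2 h3 h4 h5 h6 h7 h8
      have hq' : (fun j : Fin k => Q'.coeff ((j : ℕ) + 1)) = q := by
        have hv : Amat.mulVec (fun j : Fin k => Q'.coeff ((j : ℕ) + 1))
            = fun i : Fin k => β (i : ℕ) := by
          funext i
          simp only [Matrix.mulVec, dotProduct, hAmat, Matrix.of_apply]
          exact hsys' i
        calc (fun j : Fin k => Q'.coeff ((j : ℕ) + 1))
            = (Amat⁻¹ * Amat).mulVec (fun j : Fin k => Q'.coeff ((j : ℕ) + 1)) := by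
              rw [Matrix.nonsing_inv_mul _ hunit, Matrix.one_mulVec]
          _ = Amat⁻¹.mulVec (Amat.mulVec (fun j : Fin k => Q'.coeff ((j : ℕ) + 1))) := by
              rw [Matrix.mulVec_mulVec]
          _ = q := by rw [hv, hqdef]
      have hQQ : Q' = Q0 := by
        refine Polynomial.ext fun i => ?_
        rcases Nat.eq_zero_or_pos i with h0 | hposi
        · subst h0
          rw [Polynomial.coeff_zero_eq_eval_zero, Polynomial.coeff_zero_eq_eval_zero, h4, hQ0ev]
        rcases le_or_gt i k with hik | hik
        · set jj : Fin k := ⟨i - 1, by omega⟩ with hjj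
          have hi : i = (jj : ℕ) + 1 := by rw [hjj]; simp; omega
          rw [hi, hQ0coeff jj, ← congrFun hq' jj]
        · rw [Polynomial.coeff_eq_zero_of_natDegree_lt (lt_of_le_of_lt h1 hik),
            Polynomial.coeff_eq_zero_of_natDegree_lt (lt_of_le_of_lt hQ0deg hik)]
      rw [hQQ] at hP'eq hPh'eq
      exact Prod.ext hQQ (Prod.ext hP'eq hPh'eq)
  · -- part 2
    intro Q P Phat hdQ hdP hdPh hQ0 hP0 hO1 hO2 hO3
    exact (main2 Q P Phat hdQ hdP hdPh hQ0 hP0 hO1 hO2 hO3).1
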